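/- For every n ∈ ℕ and y ∈ ℝ, ∫_ℝ e^{ixy} H_n(x) e^{-x²} dx = √π (iy)^n e^{-y²/4}, where H_n is the n-th (physicists') Hermite polynomial. -/

import Mathlib

open MeasureTheory Polynomial

/-- The physicists' Hermite polynomials, defined by the recursion
`H₀ = 1`, `H_{n+1}(x) = 2x·H_n(x) − H_n'(x)`, equivalent to
`H_n(x) = (−1)ⁿ e^{x²} dⁿ/dxⁿ e^{−x²}`. -/
noncomputable def physHermite : ℕ → Polynomial ℝ
  | 0 => 1
  | n + 1 => 2 * Polynomial.X * physHermite n - (physHermite n).derivative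

lemma integrable_poly_gaussian (p : Polynomial ℝ) :
    Integrable fun x : ℝ => p.eval x * Real.exp (-x ^ 2) := by
  induction p using Polynomial.induction_on' with
  | add p q hp hq => simpa [add_mul, Pi.add_def] using hp.add hq
  | monomial n a =>
      have h := (integrable_rpow_mul_exp_neg_mul_sq (b := 1) one_pos
        (s := (n : ℝ)) (neg_one_lt_zero.trans_le (Nat.cast_nonneg n))).const_mul a
      simpa [Polynomial.eval_monomial, Real.rpow_natCast, mul_assoc, neg_mul, one_mul] using h

lemma integrable_cexp_poly_gaussian (p : Polynomial ℝ) (y : ℝ) :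
    Integrable fun x : ℝ =>
      Complex.exp (Complex.I * x * y) * ((p.eval x : ℝ) : ℂ) *
        ((Real.exp (-x ^ 2) : ℝ) : ℂ) := by
  refine (integrable_poly_gaussian p).abs.mono' ?_ ?_
  · apply Continuous.aestronglyMeasurable
    fun_prop
  · filter_upwards with x
    have h1 : ‖Complex.exp (Complex.I * x * y)‖ = 1 := by
      rw [Complex.norm_exp]
      simp [Complex.mul_re, Complex.mul_im]
    rw [norm_mul, norm_mul, h1, one_mul, Complex.norm_real, Complex.norm_real]
    rw [abs_mul]
    simp [Real.norm_eq_abs]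

lemma hasDerivAt_hermite_gaussian (n : ℕ) (x : ℝ) :
    HasDerivAt (fun x : ℝ => (physHermite n).eval x * Real.exp (-x ^ 2))
      (-((physHermite (n + 1)).eval x * Real.exp (-x ^ 2))) x := by
  have h1 := (physHermite n).hasDerivAt x
  have h2 : HasDerivAt (fun x : ℝ => Real.exp (-x ^ 2))
      (Real.exp (-x ^ 2) * -(2 * x ^ 1)) x := ((hasDerivAt_pow 2 x).neg).exp
  have := h1.mul h2
  refine this.congr_deriv (Eq.symm ?_)
  show -((physHermite (n + 1)).eval x * Real.exp (-x ^ 2)) = _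
  simp only [physHermite, Polynomial.eval_sub, Polynomial.eval_mul, Polynomial.eval_ofNat,
    Polynomial.eval_X, pow_one]
  ring

lemma hasDerivAt_u (y x : ℝ) :
    HasDerivAt (fun x : ℝ => Complex.exp (Complex.I * x * y))
      (Complex.I * y * Complex.exp (Complex.I * x * y)) x := by
  have h0 : HasDerivAt (fun z : ℂ => Complex.I * z * y) (Complex.I * y) (x : ℂ) := by
    simpa using ((hasDerivAt_id (x : ℂ)).const_mul Complex.I).mul_const (y : ℂ)
  have h : HasDerivAt (fun z : ℂ => Complex.exp (Complex.I * z * y))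
      (Complex.I * y * Complex.exp (Complex.I * x * y)) (x : ℂ) := by
    simpa [mul_comm] using h0.cexp
  exact h.comp_ofReal

/-- For every `n ∈ ℕ` and `y ∈ ℝ`,
`∫_ℝ e^{ixy} H_n(x) e^{-x²} dx = √π (iy)^n e^{-y²/4}`. -/
theorem integral_exp_mul_hermite_mul_gaussian (n : ℕ) (y : ℝ) :
    ∫ x : ℝ, Complex.exp (Complex.I * x * y) * ((physHermite n).eval x : ℝ) *
        (Real.exp (-x ^ 2) : ℝ)
      = (Real.sqrt Real.pi : ℝ) * (Complex.I * y) ^ n *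
        Complex.exp (-(y : ℂ) ^ 2 / 4) := by
  induction n with
  | zero =>
    have h := fourierIntegral_gaussian (b := 1) (by norm_num) (y : ℂ)
    simp only [physHermite, Polynomial.eval_one, Complex.ofReal_one, mul_one, pow_zero]
    calc ∫ x : ℝ, Complex.exp (Complex.I * x * y) * ((Real.exp (-x ^ 2) : ℝ) : ℂ)
        = ∫ x : ℝ, Complex.exp (Complex.I * (y : ℂ) * x) * Complex.exp (-1 * (x : ℂ) ^ 2) := by
          congr 1; funext x
          rw [Complex.ofReal_exp]
          push_cast
          ring_nf
      _ = ((Real.pi : ℂ) / 1) ^ (1 / 2 : ℂ) * Complex.exp (-(y : ℂ) ^ 2 / (4 * 1)) := h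
      _ = ((Real.sqrt Real.pi : ℝ) : ℂ) * Complex.exp (-(y : ℂ) ^ 2 / 4) := by
          rw [div_one, mul_one, Real.sqrt_eq_rpow, Complex.ofReal_cpow Real.pi_nonneg]
          norm_num
  | succ n ih =>
    set u : ℝ → ℂ := fun x => Complex.exp (Complex.I * x * y) with hu_def
    set u' : ℝ → ℂ := fun x => Complex.I * y * Complex.exp (Complex.I * x * y) with hu'_def
    set v : ℝ → ℂ := fun x => (((physHermite n).eval x * Real.exp (-x ^ 2) : ℝ) : ℂ) with hv_def
    set v' : ℝ → ℂ :=
      fun x => ((-((physHermite (n + 1)).eval x * Real.exp (-x ^ 2)) : ℝ) : ℂ) with hv'_def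
    have hu : ∀ x, HasDerivAt u (u' x) x := fun x => hasDerivAt_u y x
    have hv : ∀ x, HasDerivAt v (v' x) x :=
      fun x => (hasDerivAt_hermite_gaussian n x).ofReal_comp
    have huv' : Integrable (u * v') := by
      have := (integrable_cexp_poly_gaussian (physHermite (n + 1)) y).neg
      refine this.congr ?_
      filter_upwards with x
      simp only [hu_def, hv'_def, Pi.mul_apply, Pi.neg_apply, Complex.ofReal_neg,
        Complex.ofReal_mul]
      ring
    have hu'v : Integrable (u' * v) := by
      have := (integrable_cexp_poly_gaussian (physHermite n) y).const_mul (Complex.I * y)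
      refine this.congr ?_
      filter_upwards with x
      simp only [hu'_def, hv_def, Pi.mul_apply, Complex.ofReal_mul]
      ring
    have huv : Integrable (u * v) := by
      have := integrable_cexp_poly_gaussian (physHermite n) y
      refine this.congr ?_
      filter_upwards with x
      simp only [hu_def, hv_def, Pi.mul_apply, Complex.ofReal_mul]
      ring
    have ibp := integral_mul_deriv_eq_deriv_mul_of_integrable (fun x _ => hu x) (fun x _ => hv x) huv' hu'v huv
    have key : ∫ x : ℝ, Complex.exp (Complex.I * x * y) *
        (((physHermite (n + 1)).eval x : ℝ) : ℂ) * ((Real.exp (-x ^ 2) : ℝ) : ℂ)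
        = - ∫ x : ℝ, u x * v' x := by
      rw [← integral_neg]
      congr 1; funext x
      simp only [hu_def, hv'_def, Complex.ofReal_neg, Complex.ofReal_mul]
      ring
    rw [key, ibp, neg_neg]
    have key2 : ∫ x : ℝ, u' x * v x
        = (Complex.I * y) * ∫ x : ℝ, Complex.exp (Complex.I * x * y) *
            (((physHermite n).eval x : ℝ) : ℂ) * ((Real.exp (-x ^ 2) : ℝ) : ℂ) := by
      rw [← integral_const_mul]
      congr 1; funext x
      simp only [hu'_def, hv_def, Complex.ofReal_mul]
      ring
    rw [key2, ih]
    ring
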